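/- Let u : ℝ² → ℝ² be C¹ with div u = ∂u₁/∂x + ∂u₂/∂y = 0 everywhere, and let ω : ℝ × ℝ² → ℝ be C¹ and satisfy the advection (Liouville) equation ∂ω/∂t(t,x) + u(x)·∇ₓω(t,x) = 0 for all (t,x). Suppose there is a compact set K ⊆ ℝ² with ω(t,x) = 0 for all t ∈ ℝ and all x ∉ K. Then for every C¹ function f : ℝ → ℝ with f(0) = 0, the generalized enstrophy C_f(t) = ∫_{ℝ²} f(ω(t,x)) dx is independent of t. -/

import Mathlib

open MeasureTheory Metric Set

/-- Divergence theorem on ℝ²: the integral of the divergence of a C¹ vector field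
vanishing outside a compact set is zero. -/
lemma div_integral_zero (φ ψ : ℝ × ℝ → ℝ) (hφ : ContDiff ℝ 1 φ) (hψ : ContDiff ℝ 1 ψ)
    (K : Set (ℝ × ℝ)) (hK : IsCompact K)
    (hφ0 : ∀ x ∉ K, φ x = 0) (hψ0 : ∀ x ∉ K, ψ x = 0) :
    ∫ x : ℝ × ℝ, (fderiv ℝ φ x (1, 0) + fderiv ℝ ψ x (0, 1)) = 0 := by
  obtain ⟨R, hR0, hRK⟩ := hK.isBounded.subset_ball_lt 0 0
  set a : ℝ × ℝ := (-R, -R) with ha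
  set b : ℝ × ℝ := (R, R) with hb
  have hle : a ≤ b := ⟨by simp [ha, hb]; linarith, by simp [ha, hb]; linarith⟩
  have hKsub : K ⊆ Ioo (-R) R ×ˢ Ioo (-R) R := by
    intro x hx
    have : ‖x‖ < R := by simpa using hRK hx
    have h1 : |x.1| < R := lt_of_le_of_lt (by rw [← Real.norm_eq_abs]; exact norm_fst_le x) this
    have h2 : |x.2| < R := lt_of_le_of_lt (by rw [← Real.norm_eq_abs]; exact norm_snd_le x) this
    exact ⟨abs_lt.1 h1, abs_lt.1 h2⟩
  -- divergence vanishes off K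
  have hfd0 : ∀ (h : ℝ × ℝ → ℝ), (∀ x ∉ K, h x = 0) → ∀ x ∉ K, fderiv ℝ h x = 0 := by
    intro h h0 x hx
    have hev : h =ᶠ[nhds x] (fun _ => (0 : ℝ)) :=
      Filter.eventuallyEq_of_mem (hK.isClosed.isOpen_compl.mem_nhds hx) h0
    rw [hev.fderiv_eq, fderiv_fun_const]
    rfl
  have hdiv0 : ∀ x ∉ K, fderiv ℝ φ x (1, 0) + fderiv ℝ ψ x (0, 1) = 0 := by
    intro x hx
    rw [hfd0 φ hφ0 x hx, hfd0 ψ hψ0 x hx]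
    simp
  have hcont : Continuous fun x => fderiv ℝ φ x (1, 0) + fderiv ℝ ψ x (0, 1) := by
    have h1 : Continuous (fderiv ℝ φ) := hφ.continuous_fderiv one_ne_zero
    have h2 : Continuous (fderiv ℝ ψ) := hψ.continuous_fderiv one_ne_zero
    exact (h1.clm_apply continuous_const).add (h2.clm_apply continuous_const)
  have hIcc : ∀ x, x ∉ Icc a b → fderiv ℝ φ x (1, 0) + fderiv ℝ ψ x (0, 1) = 0 := by
    intro x hx
    refine hdiv0 x fun hxK => hx ?_
    have := hKsub hxK
    exact ⟨⟨(this.1.1).le, (this.2.1).le⟩, ⟨(this.1.2).le, (this.2.2).le⟩⟩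
  rw [← setIntegral_eq_integral_of_forall_compl_eq_zero hIcc]
  have key := integral_divergence_prod_Icc_of_hasFDerivAt_off_countable_of_le
    φ ψ (fun x => fderiv ℝ φ x) (fun x => fderiv ℝ ψ x) a b hle ∅ countable_empty
    (hφ.continuous.continuousOn) (hψ.continuous.continuousOn)
    (fun x _ => (hφ.differentiable one_ne_zero x).hasFDerivAt)
    (fun x _ => (hψ.differentiable one_ne_zero x).hasFDerivAt)
    (hcont.continuousOn.integrableOn_compact isCompact_Icc)
  rw [key]
  have hbd : ∀ (c : ℝ × ℝ), (c.1 = R ∨ c.1 = -R ∨ c.2 = R ∨ c.2 = -R) → c ∉ K := by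
    intro c hc hcK
    have := hKsub hcK
    rcases hc with h | h | h | h
    · exact absurd (h ▸ this.1.2) (lt_irrefl R)
    · exact absurd (h ▸ this.1.1) (lt_irrefl (-R))
    · exact absurd (h ▸ this.2.2) (lt_irrefl R)
    · exact absurd (h ▸ this.2.1) (lt_irrefl (-R))
  have e1 : ∀ x : ℝ, ψ (x, b.2) = 0 := fun x => hψ0 _ (hbd _ (Or.inr (Or.inr (Or.inl rfl))))
  have e2 : ∀ x : ℝ, ψ (x, a.2) = 0 := fun x => hψ0 _ (hbd _ (Or.inr (Or.inr (Or.inr rfl))))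
  have e3 : ∀ y : ℝ, φ (b.1, y) = 0 := fun y => hφ0 _ (hbd _ (Or.inl rfl))
  have e4 : ∀ y : ℝ, φ (a.1, y) = 0 := fun y => hφ0 _ (hbd _ (Or.inr (Or.inl rfl)))
  simp [e1, e2, e3, e4]

theorem generalized_enstrophy_conserved
    (u : ℝ × ℝ → ℝ × ℝ) (hu : ContDiff ℝ 1 u)
    (hdiv : ∀ p : ℝ × ℝ,
      fderiv ℝ (fun q => (u q).1) p (1, 0) + fderiv ℝ (fun q => (u q).2) p (0, 1) = 0)
    (ω : ℝ × (ℝ × ℝ) → ℝ) (hω : ContDiff ℝ 1 ω)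
    (hadv : ∀ (t : ℝ) (x : ℝ × ℝ),
      fderiv ℝ (fun s => ω (s, x)) t 1 + fderiv ℝ (fun y => ω (t, y)) x (u x) = 0)
    (K : Set (ℝ × ℝ)) (hK : IsCompact K)
    (hsupp : ∀ (t : ℝ) (x : ℝ × ℝ), x ∉ K → ω (t, x) = 0)
    (f : ℝ → ℝ) (hf : ContDiff ℝ 1 f) (hf0 : f 0 = 0) :
    ∀ t₁ t₂ : ℝ, ∫ x : ℝ × ℝ, f (ω (t₁, x)) = ∫ x : ℝ × ℝ, f (ω (t₂, x)) := by
  -- g = f ∘ ω, D = time derivative of g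
  set g : ℝ × (ℝ × ℝ) → ℝ := fun p => f (ω p) with hgdef
  have hg : ContDiff ℝ 1 g := hf.comp hω
  set D : ℝ × (ℝ × ℝ) → ℝ := fun p => fderiv ℝ g p ((1 : ℝ), (0 : ℝ × ℝ)) with hDdef
  have hDcont : Continuous D :=
    (hg.continuous_fderiv one_ne_zero).clm_apply continuous_const
  -- time slice derivative
  have hslice : ∀ (G : ℝ × (ℝ × ℝ) → ℝ) (hG : ContDiff ℝ 1 G) (t : ℝ) (x : ℝ × ℝ),
      HasDerivAt (fun s => G (s, x)) (fderiv ℝ G (t, x) ((1 : ℝ), (0 : ℝ × ℝ))) t := by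
    intro G hG t x
    have h1 : HasDerivAt (fun s : ℝ => (s, x)) ((1 : ℝ), (0 : ℝ × ℝ)) t :=
      HasDerivAt.prodMk (hasDerivAt_id t) (hasDerivAt_const t x)
    exact (hG.differentiable one_ne_zero (t, x)).hasFDerivAt.comp_hasDerivAt t h1
  -- spatial slice derivative
  have hspace : ∀ (G : ℝ × (ℝ × ℝ) → ℝ) (hG : ContDiff ℝ 1 G) (t : ℝ) (x : ℝ × ℝ),
      HasFDerivAt (fun y => G (t, y))
        ((fderiv ℝ G (t, x)).comp (ContinuousLinearMap.inr ℝ ℝ (ℝ × ℝ))) x := by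
    intro G hG t x
    have h1 : HasFDerivAt (fun y : ℝ × ℝ => ((t : ℝ), y))
        (ContinuousLinearMap.inr ℝ ℝ (ℝ × ℝ)) x :=
      HasFDerivAt.prodMk (hasFDerivAt_const t x) (hasFDerivAt_id x)
    exact (hG.differentiable one_ne_zero (t, x)).hasFDerivAt.comp x h1
  -- chain rule: D and spatial derivative of g in terms of ω
  have hchain : ∀ p : ℝ × (ℝ × ℝ),
      HasFDerivAt g (deriv f (ω p) • fderiv ℝ ω p) p := fun p =>
    ((hf.differentiable one_ne_zero (ω p)).hasDerivAt).comp_hasFDerivAt p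
      (hω.differentiable one_ne_zero p).hasFDerivAt
  have hfderiv_g : ∀ p, fderiv ℝ g p = deriv f (ω p) • fderiv ℝ ω p :=
    fun p => (hchain p).fderiv
  -- advection for g : D (t,x) + fderiv (g(t,·)) x (u x) = 0
  have hadv_g : ∀ (t : ℝ) (x : ℝ × ℝ),
      D (t, x) + fderiv ℝ (fun y => g (t, y)) x (u x) = 0 := by
    intro t x
    have h1 : fderiv ℝ (fun s => ω (s, x)) t 1 = fderiv ℝ ω (t, x) ((1 : ℝ), (0 : ℝ × ℝ)) := by
      rw [← (hslice ω hω t x).deriv, ← fderiv_apply_one_eq_deriv]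
    have h2 : fderiv ℝ (fun y => ω (t, y)) x (u x) = fderiv ℝ ω (t, x) (0, u x) := by
      rw [(hspace ω hω t x).fderiv]; rfl
    have h3 : fderiv ℝ (fun y => g (t, y)) x (u x)
        = deriv f (ω (t, x)) * fderiv ℝ ω (t, x) (0, u x) := by
      rw [(hspace g hg t x).fderiv]
      simp only [ContinuousLinearMap.coe_comp', Function.comp_apply,
        ContinuousLinearMap.inr_apply, hfderiv_g]
      rfl
    have h4 : D (t, x) = deriv f (ω (t, x)) * fderiv ℝ ω (t, x) ((1 : ℝ), (0 : ℝ × ℝ)) := by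
      simp only [hDdef, hfderiv_g]; rfl
    have := hadv t x
    rw [h1, h2] at this
    rw [h3, h4, ← mul_add, this, mul_zero]
  -- g and D vanish off K
  have hg0 : ∀ (t : ℝ) (x : ℝ × ℝ), x ∉ K → g (t, x) = 0 := by
    intro t x hx; simp only [hgdef, hsupp t x hx, hf0]
  have hD0 : ∀ (t : ℝ) (x : ℝ × ℝ), x ∉ K → D (t, x) = 0 := by
    intro t x hx
    have h1 : HasDerivAt (fun s => g (s, x)) (D (t, x)) t := hslice g hg t x
    have h2 : (fun s => g (s, x)) = fun _ => (0 : ℝ) := funext fun s => hg0 s x hx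
    have h3 : HasDerivAt (fun s => g (s, x)) 0 t := h2 ▸ hasDerivAt_const t (0 : ℝ)
    exact h1.unique h3
  -- ∫ D (t, x) dx = 0 via divergence theorem
  have hintD : ∀ t : ℝ, ∫ x : ℝ × ℝ, D (t, x) = 0 := by
    intro t
    set φ : ℝ × ℝ → ℝ := fun y => (u y).1 * g (t, y) with hφdef
    set ψ : ℝ × ℝ → ℝ := fun y => (u y).2 * g (t, y) with hψdef
    have hgt : ContDiff ℝ 1 fun y : ℝ × ℝ => g (t, y) :=
      hg.comp (contDiff_const.prodMk contDiff_id)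
    have hφ : ContDiff ℝ 1 φ := (hu.fst).mul hgt
    have hψ : ContDiff ℝ 1 ψ := (hu.snd).mul hgt
    have hφ0 : ∀ x ∉ K, φ x = 0 := fun x hx => by simp [hφdef, hg0 t x hx]
    have hψ0 : ∀ x ∉ K, ψ x = 0 := fun x hx => by simp [hψdef, hg0 t x hx]
    -- pointwise: D (t,x) = -(div (φ, ψ) x)
    have hpt : ∀ x : ℝ × ℝ, D (t, x) = -(fderiv ℝ φ x (1, 0) + fderiv ℝ ψ x (0, 1)) := by
      intro x
      have hu1 : DifferentiableAt ℝ (fun q => (u q).1) x := (hu.fst.differentiable one_ne_zero) x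
      have hu2 : DifferentiableAt ℝ (fun q => (u q).2) x := (hu.snd.differentiable one_ne_zero) x
      have hgx : DifferentiableAt ℝ (fun y => g (t, y)) x := (hgt.differentiable one_ne_zero) x
      have d1 : fderiv ℝ φ x = (u x).1 • fderiv ℝ (fun y => g (t, y)) x
          + g (t, x) • fderiv ℝ (fun q => (u q).1) x := (hu1.hasFDerivAt.mul hgx.hasFDerivAt).fderiv
      have d2 : fderiv ℝ ψ x = (u x).2 • fderiv ℝ (fun y => g (t, y)) x
          + g (t, x) • fderiv ℝ (fun q => (u q).2) x := (hu2.hasFDerivAt.mul hgx.hasFDerivAt).fderiv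
      have hux : u x = (u x).1 • ((1 : ℝ), (0 : ℝ)) + (u x).2 • ((0 : ℝ), (1 : ℝ)) := by
        ext <;> simp
      have hlin : fderiv ℝ (fun y => g (t, y)) x (u x)
          = (u x).1 * fderiv ℝ (fun y => g (t, y)) x (1, 0)
            + (u x).2 * fderiv ℝ (fun y => g (t, y)) x (0, 1) := by
        have h := congrArg (fderiv ℝ (fun y => g (t, y)) x) hux
        simp only [map_add, ContinuousLinearMap.map_smul, smul_eq_mul] at h
        exact h
      have hadvg := hadv_g t x
      rw [hlin] at hadvg
      rw [d1, d2]
      simp only [ContinuousLinearMap.add_apply, ContinuousLinearMap.smul_apply, smul_eq_mul]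
      have hdivu := hdiv x
      have h5 : g (t, x) * (fderiv ℝ (fun q => (u q).1) x (1, 0))
          + g (t, x) * (fderiv ℝ (fun q => (u q).2) x (0, 1)) = 0 := by
        rw [← mul_add, hdivu, mul_zero]
      linarith
    have := div_integral_zero φ ψ hφ hψ K hK hφ0 hψ0
    calc ∫ x : ℝ × ℝ, D (t, x)
        = ∫ x : ℝ × ℝ, -(fderiv ℝ φ x (1, 0) + fderiv ℝ ψ x (0, 1)) := by
          exact integral_congr_ae (Filter.Eventually.of_forall hpt)
      _ = -(∫ x : ℝ × ℝ, (fderiv ℝ φ x (1, 0) + fderiv ℝ ψ x (0, 1))) := integral_neg _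
      _ = 0 := by rw [this, neg_zero]
  -- differentiate under the integral sign
  have hF : ∀ t₀ : ℝ, HasDerivAt (fun t => ∫ x : ℝ × ℝ, g (t, x)) 0 t₀ := by
    intro t₀
    obtain ⟨M, hM⟩ := ((isCompact_closedBall t₀ 1).prod hK).exists_bound_of_continuousOn
      hDcont.continuousOn
    have key := hasDerivAt_integral_of_dominated_loc_of_deriv_le
      (F := fun t x => g (t, x)) (F' := fun t x => D (t, x)) (x₀ := t₀)
      (bound := K.indicator fun _ => M) (μ := volume) (ball_mem_nhds t₀ one_pos)
      (Filter.Eventually.of_forall fun t =>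
        ((hg.continuous.comp (Continuous.prodMk_right t)).aestronglyMeasurable))
      (((hg.continuous.comp (Continuous.prodMk_right t₀)).integrable_of_hasCompactSupport
        (HasCompactSupport.intro hK fun x hx => hg0 t₀ x hx)))
      ((hDcont.comp (Continuous.prodMk_right t₀)).aestronglyMeasurable)
      (Filter.Eventually.of_forall fun x t ht => by
        show ‖D (t, x)‖ ≤ K.indicator (fun _ => M) x
        by_cases hx : x ∈ K
        · rw [Set.indicator_of_mem hx]
          exact hM (t, x) ⟨ball_subset_closedBall ht, hx⟩
        · rw [Set.indicator_of_notMem hx, hD0 t x hx]; simp)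
      ((integrable_indicator_iff hK.measurableSet).2
        (integrableOn_const hK.measure_lt_top.ne))
      (Filter.Eventually.of_forall fun x t _ => hslice g hg t x)
    have := key.2
    rwa [hintD t₀] at this
  -- conclude constancy
  intro t₁ t₂
  have hdiffF : Differentiable ℝ (fun t => ∫ x : ℝ × ℝ, g (t, x)) :=
    fun t => (hF t).differentiableAt
  have hderiv0 : ∀ t, deriv (fun t => ∫ x : ℝ × ℝ, g (t, x)) t = 0 := fun t => (hF t).deriv
  exact is_const_of_deriv_eq_zero hdiffF hderiv0 t₁ t₂
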